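/- Let K be a field of characteristic 2 and n a positive integer. Then there exists a regular quadratic form q on K^{2n} for which the map X ↦ J_{2n}(1)·X is q-orthogonal, i.e., q(JX) = q(X) for all X, where the polar form of q is non-degenerate. -/

import Mathlib

set_option linter.unusedSectionVars false

open Matrix

/-- The Jordan block of size `m` with eigenvalue `1`. -/
def jordanOne (K : Type*) [Field K] (m : ℕ) : Matrix (Fin m) (Fin m) K :=
  Matrix.of fun i j => if (i : ℕ) = j ∨ (i : ℕ) + 1 = j then 1 else 0

namespace JordanCharTwoAux

open Polynomial Finset

variable (K : Type*) [Field K] [CharP K 2] (n : ℕ)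

/-- auxiliary polynomial family -/
noncomputable def fp (i : ℕ) : K[X] :=
  ∑ r ∈ Finset.range (i + 1), (n.choose r : K) • (X + 1) ^ (i - r)

lemma two_eq_zero : (2 : K[X]) = 0 := by
  have : ((2 : ℕ) : K[X]) = 0 := CharP.cast_eq_zero _ 2
  simpa using this

lemma add_self (p : K[X]) : p + p = 0 := by
  have : p + p = 2 * p := by ring
  rw [this, two_eq_zero, zero_mul]

lemma addK_self (a : K) : a + a = 0 := by
  have : a + a = 2 * a := by ring
  rw [this, show (2:K) = 0 from by exact_mod_cast CharP.cast_eq_zero K 2, zero_mul]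

lemma fp_zero : fp K n 0 = 1 := by
  simp [fp]

lemma fp_succ (i : ℕ) :
    fp K n (i + 1) = (X + 1) * fp K n i + C (n.choose (i + 1) : K) := by
  rw [fp, Finset.sum_range_succ, fp, Finset.mul_sum]
  congr 1
  · refine Finset.sum_congr rfl fun r hr => ?_
    rw [Finset.mem_range] at hr
    rw [mul_smul_comm, ← pow_succ']
    congr 2
    omega
  · rw [Nat.sub_self, pow_zero, smul_eq_C_mul, mul_one]

lemma fp_n : fp K n n = X ^ n := by
  have h := add_pow (1 : K[X]) (X + 1) n
  have h1 : (1 : K[X]) + (X + 1) = X := by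
    have : (1 : K[X]) + (X + 1) = X + 2 := by ring
    rw [this, two_eq_zero, add_zero]
  rw [h1] at h
  rw [fp, h]
  refine Finset.sum_congr rfl fun r hr => ?_
  simp [smul_eq_C_mul, Polynomial.C_eq_natCast, mul_comm]

variable {n}

lemma fp_pred_mul (hn : 0 < n) : (X + 1) * fp K n (n - 1) = X ^ n + 1 := by
  have h := fp_succ K n (n - 1)
  rw [show n - 1 + 1 = n from by omega, fp_n, Nat.choose_self, Nat.cast_one, _root_.map_one] at h
  calc (X + 1) * fp K n (n - 1)
      = (X + 1) * fp K n (n - 1) + (1 + 1) := by rw [add_self K (1:K[X]), add_zero]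
    _ = ((X + 1) * fp K n (n - 1) + 1) + 1 := by ring
    _ = X ^ n + 1 := by rw [← h]

lemma X_add_one_ne_zero : (X + 1 : K[X]) ≠ 0 := by
  have : (X + 1 : K[X]) = X + C 1 := by rw [Polynomial.C_1]
  rw [this]
  exact (Polynomial.monic_X_add_C (1 : K)).ne_zero

lemma geom_mul (s : ℕ) : (X + 1) * ∑ k ∈ range s, (X : K[X]) ^ k = X ^ s + 1 := by
  have h := geom_sum_mul (X : K[X]) s
  have hneg : (X : K[X]) - 1 = X + 1 := by
    have : (X : K[X]) - 1 + (1 + 1) = X + 1 := by ring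
    rw [add_self K (1:K[X]), add_zero] at this
    exact this
  have hneg2 : (X : K[X]) ^ s - 1 = X ^ s + 1 := by
    have : (X : K[X]) ^ s - 1 + (1 + 1) = X ^ s + 1 := by ring
    rw [add_self K (1:K[X]), add_zero] at this
    exact this
  rw [hneg, hneg2] at h
  rw [mul_comm]
  exact h

lemma fp_pred (hn : 0 < n) : fp K n (n - 1) = ∑ k ∈ range n, (X : K[X]) ^ k := by
  apply mul_left_cancel₀ (X_add_one_ne_zero K)
  rw [fp_pred_mul K hn, geom_mul]

variable (n)

/-- The patched polynomial family. -/
noncomputable def Fp (i : ℕ) : K[X] :=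
  fp K n i + if i = n - 1 then X ^ n else 0

variable {n}

lemma Fp_pred (hn : 0 < n) : Fp K n (n - 1) = ∑ k ∈ range (n + 1), (X : K[X]) ^ k := by
  rw [Fp, if_pos rfl, fp_pred K hn, Finset.sum_range_succ]

lemma Fp_pred_mul (hn : 0 < n) : (X + 1) * Fp K n (n - 1) = X ^ (n + 1) + 1 := by
  rw [Fp_pred K hn, geom_mul]

lemma Fp_of_ne {i : ℕ} (h : i ≠ n - 1) : Fp K n i = fp K n i := by
  rw [Fp, if_neg h, add_zero]

lemma fp_coeff (i k : ℕ) :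
    (fp K n i).coeff k = ∑ r ∈ range (i + 1), (n.choose r : K) * ((i - r).choose k : K) := by
  rw [fp, Polynomial.finset_sum_coeff]
  refine Finset.sum_congr rfl fun r hr => ?_
  rw [Polynomial.coeff_smul, Polynomial.coeff_X_add_one_pow, smul_eq_mul]

lemma fp_coeff_eq_zero {i k : ℕ} (h : i < k) : (fp K n i).coeff k = 0 := by
  rw [fp_coeff]
  refine Finset.sum_eq_zero fun r hr => ?_
  rw [Finset.mem_range] at hr
  rw [show (i - r).choose k = 0 from Nat.choose_eq_zero_of_lt (by omega), Nat.cast_zero, mul_zero]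

lemma fp_coeff_self (i : ℕ) : (fp K n i).coeff i = 1 := by
  rw [fp_coeff]
  rw [Finset.sum_eq_single 0]
  · simp
  · intro r hr hr0
    rw [Finset.mem_range] at hr
    rw [show (i - r).choose i = 0 from Nat.choose_eq_zero_of_lt (by omega), Nat.cast_zero, mul_zero]
  · simp

variable (n)

/-- coefficient matrix (ℕ-indexed, zero-extended) -/
noncomputable def Nc : ℕ → ℕ → K := fun i j =>
  if i < n ∧ j < 2 * n then (Fp K n i).coeff (2 * n - 1 - j) else 0

variable {n}

lemma Nc_eq {i j : ℕ} (hi : i < n) (hj : j < 2 * n) :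
    Nc K n i j = (Fp K n i).coeff (2 * n - 1 - j) := if_pos ⟨hi, hj⟩

lemma Nc_zero_left {i : ℕ} (hi : n ≤ i) (j : ℕ) : Nc K n i j = 0 := by
  rw [Nc, if_neg]; omega

lemma Nc_zero (hn : 0 < n) {a b : ℕ} (hab : a + b < 2 * n - 1)
    (hne : ¬(a = n - 1 ∧ b = n - 1)) : Nc K n a b = 0 := by
  by_cases ha : a < n
  · rw [Nc_eq K ha (by omega)]
    rw [Fp]
    by_cases han : a = n - 1
    · rw [if_pos han, Polynomial.coeff_add, fp_coeff_eq_zero K (by omega),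
        Polynomial.coeff_X_pow, if_neg (by omega), add_zero]
    · rw [if_neg han, add_zero, fp_coeff_eq_zero K (by omega)]
  · exact Nc_zero_left K (by omega) b

lemma Nc_antidiag (hn : 0 < n) {i : ℕ} (hi : i < n) : Nc K n i (2 * n - 1 - i) = 1 := by
  rw [Nc_eq K hi (by omega), show 2 * n - 1 - (2 * n - 1 - i) = i from by omega, Fp,
    Polynomial.coeff_add, fp_coeff_self]
  by_cases h : i = n - 1
  · rw [if_pos h, Polynomial.coeff_X_pow, if_neg (by omega), add_zero]
  · rw [if_neg h, Polynomial.coeff_zero, add_zero]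

/-- The key combinatorial identity. -/
lemma key (hn : 0 < n) {a b : ℕ} (ha : a < 2 * n) (hb : b < 2 * n) :
    (if a = 0 then 0 else Nc K n (a - 1) b) +
      (if b = 0 then 0 else
        (Nc K n a (b - 1) + if a = 0 then 0 else Nc K n (a - 1) (b - 1))) =
    (if a = n - 1 ∧ b = n then 1 else 0) + (if a = n ∧ b = n - 1 then (1 : K) else 0) := by
  have hcomb : ∀ p : K[X], b ≠ 0 → ((X + 1) * p).coeff (2 * n - b) =
      p.coeff (2 * n - 1 - b) + p.coeff (2 * n - b) := by
    intro p hb0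
    rw [add_mul, one_mul, Polynomial.coeff_add,
      show 2 * n - b = (2 * n - 1 - b) + 1 from by omega, Polynomial.coeff_X_mul, add_comm]
  by_cases ha0 : a = 0
  · subst ha0
    rw [if_pos rfl, if_neg (show ¬(0 = n ∧ b = n - 1) from by omega), add_zero, zero_add]
    by_cases hb0 : b = 0
    · subst hb0
      rw [if_pos rfl, if_neg (show ¬(0 = n - 1 ∧ 0 = n) from by omega)]
    · rw [if_neg hb0, if_pos rfl, add_zero,
        Nc_eq K hn (show b - 1 < 2 * n from by omega),
        show 2 * n - 1 - (b - 1) = 2 * n - b from by omega,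
        Fp, Polynomial.coeff_add, fp_zero, Polynomial.coeff_one,
        if_neg (show ¬(2 * n - b = 0) from by omega), zero_add]
      by_cases hn1 : (0 : ℕ) = n - 1
      · rw [if_pos hn1, Polynomial.coeff_X_pow]
        by_cases hbn : b = n
        · rw [if_pos (show 2 * n - b = n from by omega), if_pos ⟨hn1, hbn⟩]
        · rw [if_neg (show ¬(2 * n - b = n) from by omega), if_neg (by tauto)]
      · rw [if_neg hn1, Polynomial.coeff_zero, if_neg (by tauto)]
  · by_cases han : a < n
    · -- 1 ≤ a ≤ n - 1, so n ≥ 2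
      rw [if_neg ha0]
      by_cases hb0 : b = 0
      · subst hb0
        rw [if_pos rfl, add_zero,
          Nc_eq K (show a - 1 < n from by omega) (show (0:ℕ) < 2 * n from by omega),
          Nat.sub_zero, Fp_of_ne K (show a - 1 ≠ n - 1 from by omega),
          fp_coeff_eq_zero K (show a - 1 < 2 * n - 1 from by omega),
          if_neg (show ¬(a = n - 1 ∧ 0 = n) from by omega),
          if_neg (show ¬(a = n ∧ 0 = n - 1) from by omega), add_zero]
      · rw [if_neg hb0, if_neg ha0,
          if_neg (show ¬(a = n ∧ b = n - 1) from by omega), add_zero,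
          Nc_eq K (show a - 1 < n from by omega) hb,
          Nc_eq K han (show b - 1 < 2 * n from by omega),
          Nc_eq K (show a - 1 < n from by omega) (show b - 1 < 2 * n from by omega),
          Fp_of_ne K (show a - 1 ≠ n - 1 from by omega),
          show 2 * n - 1 - (b - 1) = 2 * n - b from by omega]
        have hstep : (X + 1) * fp K n (a - 1) = fp K n a + C (n.choose a : K) := by
          have h := fp_succ K n (a - 1)
          rw [show a - 1 + 1 = a from by omega] at h
          rw [h, add_assoc, add_self, add_zero]
        have e1 : ((X + 1) * fp K n (a - 1)).coeff (2 * n - b) =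
            (fp K n a).coeff (2 * n - b) := by
          rw [hstep, Polynomial.coeff_add, Polynomial.coeff_C,
            if_neg (show ¬(2 * n - b = 0) from by omega), add_zero]
        have e2 : (Fp K n a).coeff (2 * n - b) = (fp K n a).coeff (2 * n - b) +
            (if a = n - 1 then (if 2 * n - b = n then (1 : K) else 0) else 0) := by
          rw [Fp, Polynomial.coeff_add, apply_ite (fun p : K[X] => p.coeff (2 * n - b)),
            Polynomial.coeff_X_pow, Polynomial.coeff_zero]
        calc (fp K n (a - 1)).coeff (2 * n - 1 - b) +
              ((Fp K n a).coeff (2 * n - b) + (fp K n (a - 1)).coeff (2 * n - b))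
            = ((fp K n (a - 1)).coeff (2 * n - 1 - b) + (fp K n (a - 1)).coeff (2 * n - b)) +
              (Fp K n a).coeff (2 * n - b) := by ring
          _ = (fp K n a).coeff (2 * n - b) + ((fp K n a).coeff (2 * n - b) +
              (if a = n - 1 then (if 2 * n - b = n then (1 : K) else 0) else 0)) := by
              rw [← hcomb _ hb0, e1, e2]
          _ = (if a = n - 1 then (if 2 * n - b = n then (1 : K) else 0) else 0) := by
              rw [← add_assoc, addK_self, zero_add]
          _ = if a = n - 1 ∧ b = n then 1 else 0 := by
              by_cases h1 : a = n - 1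
              · by_cases h2 : b = n
                · rw [if_pos h1, if_pos (show 2 * n - b = n from by omega), if_pos ⟨h1, h2⟩]
                · rw [if_pos h1, if_neg (show ¬(2 * n - b = n) from by omega),
                    if_neg (by tauto)]
              · rw [if_neg h1, if_neg (by tauto)]
    · by_cases hann : a = n
      · rw [if_neg ha0, if_neg (show ¬(a = n - 1 ∧ b = n) from by omega), zero_add,
          show a - 1 = n - 1 from by omega]
        by_cases hb0 : b = 0
        · subst hb0
          rw [if_pos rfl, add_zero,
            Nc_eq K (show n - 1 < n from by omega) (show (0:ℕ) < 2 * n from by omega),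
            Nat.sub_zero, Fp_pred K hn]
          rw [Polynomial.finset_sum_coeff]
          simp only [Polynomial.coeff_X_pow, Finset.sum_ite_eq, Finset.mem_range]
          by_cases hn1 : n = 1
          · rw [if_pos (show 2 * n - 1 < n + 1 from by omega),
              if_pos (show a = n ∧ 0 = n - 1 from by omega)]
          · rw [if_neg (show ¬(2 * n - 1 < n + 1) from by omega),
              if_neg (show ¬(a = n ∧ 0 = n - 1) from by omega)]
        · rw [if_neg hb0, hann, Nc_zero_left K le_rfl, zero_add,
            Nc_eq K (show n - 1 < n from by omega) hb,
            Nc_eq K (show n - 1 < n from by omega) (show b - 1 < 2 * n from by omega),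
            show 2 * n - 1 - (b - 1) = 2 * n - b from by omega,
            if_neg (show ¬(n = 0) from by omega)]
          rw [← hcomb _ hb0, Fp_pred_mul K hn, Polynomial.coeff_add,
            Polynomial.coeff_X_pow, Polynomial.coeff_one,
            if_neg (show ¬(2 * n - b = 0) from by omega), add_zero]
          by_cases hbn : b = n - 1
          · rw [if_pos (show 2 * n - b = n + 1 from by omega), if_pos ⟨rfl, hbn⟩]
          · rw [if_neg (show ¬(2 * n - b = n + 1) from by omega), if_neg (by tauto)]
      · rw [if_neg ha0, Nc_zero_left K (show n ≤ a - 1 from by omega),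
          if_neg (show ¬(a = n - 1 ∧ b = n) from by omega),
          if_neg (show ¬(a = n ∧ b = n - 1) from by omega)]
        simp [Nc_zero_left K (show n ≤ a from by omega),
          Nc_zero_left K (show n ≤ a - 1 from by omega), if_neg ha0]
variable (n)

/-- The coefficient matrix of the quadratic form. -/
noncomputable def Wm : Matrix (Fin (2 * n)) (Fin (2 * n)) K :=
  Matrix.of fun a b => Nc K n (a : ℕ) (b : ℕ)

variable {n}

lemma sumJ (g : ℕ → K) (b : Fin (2 * n)) :
    ∑ j : Fin (2 * n), g (j : ℕ) * jordanOne K (2 * n) j b =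
      g (b : ℕ) + (if (b : ℕ) = 0 then 0 else g ((b : ℕ) - 1)) := by
  have hsplit : ∀ j : Fin (2 * n), g (j : ℕ) * jordanOne K (2 * n) j b
      = (if j = b then g (j : ℕ) else 0) + (if (j : ℕ) + 1 = (b : ℕ) then g (j : ℕ) else 0) := by
    intro j
    simp only [jordanOne, Matrix.of_apply]
    by_cases h1 : (j : ℕ) = (b : ℕ)
    · have hjb : j = b := Fin.ext h1
      rw [if_pos (Or.inl h1), if_pos hjb, if_neg (by omega), mul_one, add_zero]
    · have hjb : ¬ j = b := fun h => h1 (by rw [h])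
      rw [if_neg hjb]
      by_cases h2 : (j : ℕ) + 1 = (b : ℕ)
      · rw [if_pos (Or.inr h2), if_pos h2, mul_one, zero_add]
      · rw [if_neg (by tauto), if_neg h2, mul_zero, add_zero]
  rw [Finset.sum_congr rfl (fun j _ => hsplit j), Finset.sum_add_distrib]
  congr 1
  · rw [Finset.sum_ite_eq' Finset.univ b (fun j => g (j : ℕ)), if_pos (Finset.mem_univ b)]
  · by_cases hb0 : (b : ℕ) = 0
    · rw [if_pos hb0]
      exact Finset.sum_eq_zero fun j _ => if_neg (by omega)
    · rw [if_neg hb0]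
      have hlt : (b : ℕ) - 1 < 2 * n := by omega
      rw [Finset.sum_eq_single (⟨(b : ℕ) - 1, hlt⟩ : Fin (2 * n))]
      · rw [if_pos (show ((⟨(b : ℕ) - 1, hlt⟩ : Fin (2 * n)) : ℕ) + 1 = (b : ℕ) from by
          simp only []; omega)]
      · intro j _ hj
        refine if_neg fun hc => hj (Fin.ext ?_)
        simp only []
        omega
      · intro h
        exact absurd (Finset.mem_univ _) h

lemma mulJ_entry (hn : 0 < n) (a b : Fin (2 * n)) :
    ((jordanOne K (2 * n))ᵀ * Wm K n * jordanOne K (2 * n)) a b =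
      Wm K n a b + ((if (a : ℕ) = n - 1 ∧ (b : ℕ) = n then 1 else 0) +
        (if (a : ℕ) = n ∧ (b : ℕ) = n - 1 then (1 : K) else 0)) := by
  have hrow : ∀ j : Fin (2 * n), ((jordanOne K (2 * n))ᵀ * Wm K n) a j
      = Nc K n (a : ℕ) (j : ℕ) +
        (if (a : ℕ) = 0 then 0 else Nc K n ((a : ℕ) - 1) (j : ℕ)) := by
    intro j
    rw [Matrix.mul_apply]
    have hterm : ∀ i : Fin (2 * n), (jordanOne K (2 * n))ᵀ a i * Wm K n i j
        = (fun t => Nc K n t (j : ℕ)) (i : ℕ) * jordanOne K (2 * n) i a := by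
      intro i
      rw [Matrix.transpose_apply, mul_comm]
      rfl
    rw [Finset.sum_congr rfl (fun i _ => hterm i), sumJ K (fun t => Nc K n t (j : ℕ)) a]
  rw [Matrix.mul_apply]
  have hterm2 : ∀ j : Fin (2 * n), ((jordanOne K (2 * n))ᵀ * Wm K n) a j *
      jordanOne K (2 * n) j b
      = (fun t => Nc K n (a : ℕ) t + (if (a : ℕ) = 0 then 0
          else Nc K n ((a : ℕ) - 1) t)) (j : ℕ) * jordanOne K (2 * n) j b := by
    intro j
    rw [hrow]
  rw [Finset.sum_congr rfl (fun j _ => hterm2 j),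
    sumJ K (fun t => Nc K n (a : ℕ) t + (if (a : ℕ) = 0 then 0
      else Nc K n ((a : ℕ) - 1) t)) b]
  have hkey := key K hn a.isLt b.isLt
  have hW : Wm K n a b = Nc K n (a : ℕ) (b : ℕ) := rfl
  rw [hW]
  calc (Nc K n (a : ℕ) (b : ℕ) + (if (a : ℕ) = 0 then 0 else Nc K n ((a : ℕ) - 1) (b : ℕ))) +
        (if (b : ℕ) = 0 then 0 else
          (Nc K n (a : ℕ) ((b : ℕ) - 1) + (if (a : ℕ) = 0 then 0
            else Nc K n ((a : ℕ) - 1) ((b : ℕ) - 1))))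
      = Nc K n (a : ℕ) (b : ℕ) +
        ((if (a : ℕ) = 0 then 0 else Nc K n ((a : ℕ) - 1) (b : ℕ)) +
        (if (b : ℕ) = 0 then 0 else
          (Nc K n (a : ℕ) ((b : ℕ) - 1) + (if (a : ℕ) = 0 then 0
            else Nc K n ((a : ℕ) - 1) ((b : ℕ) - 1))))) := by ring
    _ = Nc K n (a : ℕ) (b : ℕ) + ((if (a : ℕ) = n - 1 ∧ (b : ℕ) = n then 1 else 0) +
        (if (a : ℕ) = n ∧ (b : ℕ) = n - 1 then (1 : K) else 0)) := by rw [hkey]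

lemma vecMul_E_dot (hn : 0 < n) (X : Fin (2 * n) → K) :
    (X ᵥ* Matrix.of (fun a b : Fin (2 * n) =>
      (if (a : ℕ) = n - 1 ∧ (b : ℕ) = n then 1 else 0) +
      (if (a : ℕ) = n ∧ (b : ℕ) = n - 1 then (1 : K) else 0))) ⬝ᵥ X = 0 := by
  set i1 : Fin (2 * n) := ⟨n - 1, by omega⟩ with hi1
  set i2 : Fin (2 * n) := ⟨n, by omega⟩ with hi2
  have hcol : ∀ k : Fin (2 * n), (X ᵥ* Matrix.of (fun a b : Fin (2 * n) =>
      (if (a : ℕ) = n - 1 ∧ (b : ℕ) = n then 1 else 0) +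
      (if (a : ℕ) = n ∧ (b : ℕ) = n - 1 then (1 : K) else 0))) k
      = (if k = i2 then X i1 else 0) + (if k = i1 then X i2 else 0) := by
    intro k
    have : (X ᵥ* Matrix.of (fun a b : Fin (2 * n) =>
        (if (a : ℕ) = n - 1 ∧ (b : ℕ) = n then 1 else 0) +
        (if (a : ℕ) = n ∧ (b : ℕ) = n - 1 then (1 : K) else 0))) k
        = ∑ i : Fin (2 * n), X i * ((if (i : ℕ) = n - 1 ∧ (k : ℕ) = n then 1 else 0) +
          (if (i : ℕ) = n ∧ (k : ℕ) = n - 1 then (1 : K) else 0)) := rfl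
    rw [this]
    have hterm : ∀ i : Fin (2 * n),
        X i * ((if (i : ℕ) = n - 1 ∧ (k : ℕ) = n then 1 else 0) +
          (if (i : ℕ) = n ∧ (k : ℕ) = n - 1 then (1 : K) else 0))
        = (if i = i1 then (if k = i2 then X i else 0) else 0) +
          (if i = i2 then (if k = i1 then X i else 0) else 0) := by
      intro i
      have e1 : (i : ℕ) = n - 1 ↔ i = i1 := by
        rw [Fin.ext_iff]
      have e2 : (i : ℕ) = n ↔ i = i2 := by
        rw [Fin.ext_iff]
      have e3 : (k : ℕ) = n ↔ k = i2 := by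
        rw [Fin.ext_iff]
      have e4 : (k : ℕ) = n - 1 ↔ k = i1 := by
        rw [Fin.ext_iff]
      have h12 : i1 ≠ i2 := by
        rw [Ne, Fin.ext_iff]
        simp only [hi1, hi2]
        omega
      have r1 : (if (i : ℕ) = n - 1 ∧ (k : ℕ) = n then (1:K) else 0)
          = (if i = i1 ∧ k = i2 then 1 else 0) := if_congr (and_congr e1 e3) rfl rfl
      have r2 : (if (i : ℕ) = n ∧ (k : ℕ) = n - 1 then (1:K) else 0)
          = (if i = i2 ∧ k = i1 then 1 else 0) := if_congr (and_congr e2 e4) rfl rfl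
      rw [r1, r2]
      by_cases h1 : i = i1 <;> by_cases h2 : i = i2 <;> by_cases h3 : k = i1 <;>
        by_cases h4 : k = i2 <;> (clear r1 r2 e1 e2 e3 e4 hi1 hi2; simp_all [mul_add])
    rw [Finset.sum_congr rfl (fun i _ => hterm i), Finset.sum_add_distrib,
      Finset.sum_ite_eq' Finset.univ i1 (fun i => if k = i2 then X i else 0),
      Finset.sum_ite_eq' Finset.univ i2 (fun i => if k = i1 then X i else 0),
      if_pos (Finset.mem_univ _), if_pos (Finset.mem_univ _)]
  have hdot : (X ᵥ* Matrix.of (fun a b : Fin (2 * n) =>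
      (if (a : ℕ) = n - 1 ∧ (b : ℕ) = n then 1 else 0) +
      (if (a : ℕ) = n ∧ (b : ℕ) = n - 1 then (1 : K) else 0))) ⬝ᵥ X
      = ∑ k : Fin (2 * n), ((if k = i2 then X i1 else 0) + (if k = i1 then X i2 else 0))
        * X k := by
    exact Finset.sum_congr rfl fun k _ => by rw [hcol]
  rw [hdot]
  have : ∀ k : Fin (2 * n), ((if k = i2 then X i1 else 0) + (if k = i1 then X i2 else 0)) * X k
      = (if k = i2 then X i1 * X k else 0) + (if k = i1 then X i2 * X k else 0) := by
    intro k
    by_cases h1 : k = i2 <;> by_cases h2 : k = i1 <;> simp [h1, h2, add_mul]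
  rw [Finset.sum_congr rfl (fun k _ => this k), Finset.sum_add_distrib,
    Finset.sum_ite_eq' Finset.univ i2 (fun k => X i1 * X k),
    Finset.sum_ite_eq' Finset.univ i1 (fun k => X i2 * X k),
    if_pos (Finset.mem_univ _), if_pos (Finset.mem_univ _), mul_comm (X i2) (X i1)]
  exact addK_self K _

end JordanCharTwoAux


theorem exists_quadratic_for_even_jordan_char_two {K : Type*} [Field K] [CharP K 2]
    (n : ℕ) (hn : 0 < n) :
    ∃ q : QuadraticForm K (Fin (2 * n) → K),
      (QuadraticMap.polarBilin q).Nondegenerate ∧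
      (∀ X : Fin (2 * n) → K, q (jordanOne K (2 * n) *ᵥ X) = q X) := by
  classical
  open JordanCharTwoAux in
  refine ⟨(Wm K n).toQuadraticMap', ?_, ?_⟩
  · -- Nondegeneracy
    set P : Matrix (Fin (2 * n)) (Fin (2 * n)) K := Wm K n + (Wm K n)ᵀ with hPdef
    have hP0 : ∀ a b : Fin (2 * n), (a : ℕ) + (b : ℕ) < 2 * n - 1 → P a b = 0 := by
      intro a b hab
      have hPab : P a b = Nc K n (a : ℕ) (b : ℕ) + Nc K n (b : ℕ) (a : ℕ) := rfl
      rw [hPab]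
      by_cases heq : a = b
      · rw [heq]
        exact addK_self K _
      · have hne : ¬((a : ℕ) = n - 1 ∧ (b : ℕ) = n - 1) := by
          intro ⟨h1, h2⟩
          exact heq (Fin.ext (by omega))
        rw [Nc_zero K hn hab hne, Nc_zero K hn (by omega) (by tauto), add_zero]
    have hPd : ∀ i : Fin (2 * n), P (Fin.rev i) i = 1 := by
      intro i
      have hrev : ((Fin.rev i : Fin (2 * n)) : ℕ) = 2 * n - 1 - (i : ℕ) := by
        rw [Fin.val_rev]
        omega
      have hPab : P (Fin.rev i) i
          = Nc K n ((Fin.rev i : Fin (2 * n)) : ℕ) (i : ℕ) +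
            Nc K n (i : ℕ) ((Fin.rev i : Fin (2 * n)) : ℕ) := rfl
      rw [hPab, hrev]
      by_cases hi : (i : ℕ) < n
      · rw [Nc_zero_left K (show n ≤ 2 * n - 1 - (i : ℕ) from by omega), zero_add,
          Nc_antidiag K hn hi]
      · have h1 : Nc K n (2 * n - 1 - (i : ℕ)) ((i : ℕ)) = 1 := by
          have h2 := Nc_antidiag K hn (show 2 * n - 1 - (i : ℕ) < n from by omega)
          rwa [show 2 * n - 1 - (2 * n - 1 - (i : ℕ)) = (i : ℕ) from by omega] at h2
        rw [h1, Nc_zero_left K (show n ≤ (i : ℕ) from by omega), add_zero]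
    have htri : (P.submatrix (Fin.revPerm : Equiv.Perm (Fin (2 * n))) id).BlockTriangular
        id := by
      intro i j hij
      have hij' : (j : ℕ) < (i : ℕ) := by simpa using hij
      have hi2 : (i : ℕ) < 2 * n := i.isLt
      apply hP0
      simp only [id_eq, Equiv.coe_fn_mk, Fin.revPerm_apply, Fin.val_rev]
      omega
    have hdet1 : (P.submatrix (Fin.revPerm : Equiv.Perm (Fin (2 * n))) id).det = 1 := by
      rw [Matrix.det_of_upperTriangular htri]
      have : ∀ i : Fin (2 * n),
          (P.submatrix (Fin.revPerm : Equiv.Perm (Fin (2 * n))) id) i i = 1 := by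
        intro i
        have : (P.submatrix (Fin.revPerm : Equiv.Perm (Fin (2 * n))) id) i i
            = P (Fin.rev i) i := rfl
        rw [this, hPd]
      rw [Finset.prod_congr rfl (fun i _ => this i), Finset.prod_const_one]
    have hdet : P.det ≠ 0 := by
      intro h0
      have := Matrix.det_permute (Fin.revPerm : Equiv.Perm (Fin (2 * n))) P
      rw [hdet1, h0, mul_zero] at this
      exact one_ne_zero this
    have hnd := Matrix.nondegenerate_of_det_ne_zero hdet
    have hpol : ∀ x y : Fin (2 * n) → K,
        QuadraticMap.polar (⇑(Wm K n).toQuadraticMap') x y = x ⬝ᵥ (P *ᵥ y) := by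
      intro x y
      have h1 : QuadraticMap.polar (⇑(Wm K n).toQuadraticMap') x y
          = Matrix.toLinearMap₂' K (Wm K n) x y + Matrix.toLinearMap₂' K (Wm K n) y x := by
        simp only [Matrix.toQuadraticMap']
        exact LinearMap.BilinMap.polar_toQuadraticMap x y
      rw [h1, Matrix.toLinearMap₂'_apply', Matrix.toLinearMap₂'_apply']
      have h2 : y ⬝ᵥ (Wm K n *ᵥ x) = x ⬝ᵥ ((Wm K n)ᵀ *ᵥ y) := by
        rw [dotProduct_comm, ← Matrix.vecMul_transpose, Matrix.dotProduct_mulVec]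
      rw [h2, hPdef, Matrix.add_mulVec, dotProduct_add]
    constructor
    · intro x hx
      apply Matrix.separatingLeft_def.mp hnd.separatingLeft
      intro w
      have := hx w
      rw [QuadraticMap.polarBilin_apply_apply, hpol] at this
      exact this
    · intro y hy
      apply Matrix.separatingLeft_def.mp hnd.separatingLeft
      intro w
      have := hy w
      rw [QuadraticMap.polarBilin_apply_apply, QuadraticMap.polar_comm, hpol] at this
      exact this
  · -- Invariance
    intro X
    have happly : ∀ y : Fin (2 * n) → K,
        (Wm K n).toQuadraticMap' y = y ⬝ᵥ (Wm K n *ᵥ y) := by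
      intro y
      simp only [Matrix.toQuadraticMap', Matrix.toQuadraticForm']
      rw [LinearMap.BilinMap.toQuadraticMap_apply, Matrix.toLinearMap₂'_apply']
    rw [happly, happly]
    set J := jordanOne K (2 * n) with hJdef
    have hE : Jᵀ * (Wm K n * J) = Wm K n + Matrix.of (fun a b : Fin (2 * n) =>
        (if (a : ℕ) = n - 1 ∧ (b : ℕ) = n then 1 else 0) +
        (if (a : ℕ) = n ∧ (b : ℕ) = n - 1 then (1 : K) else 0)) := by
      rw [← Matrix.mul_assoc]
      ext a b
      rw [mulJ_entry K hn a b]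
      rfl
    calc (J *ᵥ X) ⬝ᵥ (Wm K n *ᵥ (J *ᵥ X))
        = (J *ᵥ X) ⬝ᵥ ((Wm K n * J) *ᵥ X) := by rw [Matrix.mulVec_mulVec]
      _ = (X ᵥ* Jᵀ) ⬝ᵥ ((Wm K n * J) *ᵥ X) := by rw [Matrix.vecMul_transpose]
      _ = ((X ᵥ* Jᵀ) ᵥ* (Wm K n * J)) ⬝ᵥ X := by rw [Matrix.dotProduct_mulVec]
      _ = (X ᵥ* (Jᵀ * (Wm K n * J))) ⬝ᵥ X := by rw [Matrix.vecMul_vecMul]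
      _ = (X ᵥ* Wm K n) ⬝ᵥ X + (X ᵥ* Matrix.of (fun a b : Fin (2 * n) =>
            (if (a : ℕ) = n - 1 ∧ (b : ℕ) = n then 1 else 0) +
            (if (a : ℕ) = n ∧ (b : ℕ) = n - 1 then (1 : K) else 0))) ⬝ᵥ X := by
          rw [hE, Matrix.vecMul_add, add_dotProduct]
      _ = (X ᵥ* Wm K n) ⬝ᵥ X := by
          rw [vecMul_E_dot K hn X, add_zero]
      _ = X ⬝ᵥ (Wm K n *ᵥ X) := by rw [Matrix.dotProduct_mulVec]
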